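/- Let ℰ and ℱ be regular bundle event structures with disjoint sets of events. If x is a configuration of ℰ·ℱ with x ∩ F ≠ ∅, then x ∩ E is maximal in C(ℰ) with respect to set inclusion. -/

import Mathlib

open Classical

namespace PCKA

/-- A bundle event structure over event universe `Ev` and alphabet `A`:
a set of events, a conflict relation, a bundle relation, a partial labelling
(modelled via `Option`) and a set of final events. -/
structure BES (Ev A : Type) where
  E : Set Ev
  conflict : Ev → Ev → Prop
  bundle : Set Ev → Ev → Prop
  lab : Ev → Option A
  final : Set Ev

variable {Ev A : Type}

/-- Well-formedness of a bundle event structure. -/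
def IsBES (ℰ : BES Ev A) : Prop :=
  (∀ e, ¬ ℰ.conflict e e) ∧
  (∀ e e', ℰ.conflict e e' → ℰ.conflict e' e) ∧
  (∀ e e', ℰ.conflict e e' → e ∈ ℰ.E ∧ e' ∈ ℰ.E) ∧
  (∀ x e, ℰ.bundle x e → e ∈ ℰ.E ∧ x ⊆ ℰ.E ∧
    ∀ a ∈ x, ∀ b ∈ x, a ≠ b → ℰ.conflict a b) ∧
  (∀ e, ℰ.lab e ≠ none → e ∈ ℰ.E) ∧
  ℰ.final ⊆ ℰ.E ∧
  (∀ a ∈ ℰ.final, ∀ b ∈ ℰ.final, a ≠ b → ℰ.conflict a b)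

/-- `α` is an event trace of `ℰ`: every event is enabled by each of its bundles
and is distinct from and conflict-free with all earlier events. -/
def IsTrace (ℰ : BES Ev A) (α : List Ev) : Prop :=
  ∀ l e r, α = l ++ e :: r →
    e ∈ ℰ.E ∧
    (∀ x, ℰ.bundle x e → ∃ e' ∈ l, e' ∈ x) ∧
    (∀ e' ∈ l, e ≠ e' ∧ ¬ ℰ.conflict e e')

/-- A configuration is the set of events of some event trace (a linearisation). -/
def IsConfig (ℰ : BES Ev A) (x : Set Ev) : Prop :=
  ∃ α : List Ev, IsTrace ℰ α ∧ {e | e ∈ α} = x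

/-- Adjacent occurrences in a list. -/
def traceAdj (α : List Ev) (a b : Ev) : Prop := ∃ l r, α = l ++ a :: b :: r

/-- The order `≼_α` induced by an event trace: reflexive transitive closure of
adjacency in the trace. -/
def traceOrder (α : List Ev) : Ev → Ev → Prop := Relation.ReflTransGen (traceAdj α)

/-- The causal order `≼_x` of a configuration: the intersection of the orders
of all its linearisations. -/
def configOrder (ℰ : BES Ev A) (x : Set Ev) (a b : Ev) : Prop :=
  ∀ α, IsTrace ℰ α → {e | e ∈ α} = x → traceOrder α a b

/-- The labelling restricted to a set of events. -/
noncomputable def labOn (ℰ : BES Ev A) (x : Set Ev) : Ev → Option A :=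
  fun e => if e ∈ x then ℰ.lab e else none

/-- `(x, o, l)` is the lposet of the configuration `x` of `ℰ`. -/
def IsLposetOf (ℰ : BES Ev A) (x : Set Ev) (o : Ev → Ev → Prop)
    (l : Ev → Option A) : Prop :=
  IsConfig ℰ x ∧
  (∀ a b, o a b ↔ (a ∈ x ∧ b ∈ x ∧ configOrder ℰ x a b)) ∧
  l = labOn ℰ x

/-- The lposet `(x,ox,lx)` is a prefix of the lposet `(y,oy,ly)`. -/
def LposetPrefix (x : Set Ev) (ox : Ev → Ev → Prop) (lx : Ev → Option A)
    (y : Set Ev) (oy : Ev → Ev → Prop) (ly : Ev → Option A) : Prop :=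
  x ⊆ y ∧
  (∀ e ∈ x, ly e = lx e) ∧
  (∀ e e', oy e e' → e' ∈ x → e ∈ x ∧ ox e e')

/-- Restriction of a list to the elements of a set (the subsequence `α|_x`). -/
noncomputable def listRestrict (α : List Ev) (x : Set Ev) : List Ev :=
  α.filter (fun e => decide (e ∈ x))

/-- The sub-BES order `ℰ ⊑ ℱ`. -/
def SubBES (ℰ ℱ : BES Ev A) : Prop :=
  ℰ.E ⊆ ℱ.E ∧
  (∀ e e', ℰ.conflict e e' ↔ (ℱ.conflict e e' ∧ e ∈ ℰ.E ∧ e' ∈ ℰ.E)) ∧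
  (∀ x e, ℰ.bundle x e → ℱ.bundle x e) ∧
  (∀ x e, ℱ.bundle x e → e ∈ ℰ.E → x ⊆ ℰ.E ∧ ℰ.bundle x e) ∧
  (∀ e ∈ ℰ.E, ℰ.lab e = ℱ.lab e) ∧
  (∀ e, e ∈ ℰ.final ↔ (e ∈ ℱ.final ∧ e ∈ ℰ.E))

/-- `ℰ` is the componentwise union of the chain `c`. -/
def IsChainUnion (c : ℕ → BES Ev A) (ℰ : BES Ev A) : Prop :=
  ℰ.E = (⋃ i, (c i).E) ∧
  (∀ e e', ℰ.conflict e e' ↔ ∃ i, (c i).conflict e e') ∧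
  (∀ x e, ℰ.bundle x e ↔ ∃ i, (c i).bundle x e) ∧
  (∀ i, ∀ e ∈ (c i).E, ℰ.lab e = (c i).lab e) ∧
  (∀ e, e ∉ (⋃ i, (c i).E) → ℰ.lab e = none) ∧
  ℰ.final = (⋃ i, (c i).final)

/-- Immediate conflict. -/
def ImmConflict (ℰ : BES Ev A) (e e' : Ev) : Prop :=
  ℰ.conflict e e' ∧
  ∃ x, IsConfig ℰ x ∧ IsConfig ℰ (x ∪ {e}) ∧ IsConfig ℰ (x ∪ {e'})

/-- A partial cluster: pairwise immediately conflicting, equally pointed events. -/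
def PartialCluster (ℰ : BES Ev A) (K : Set Ev) : Prop :=
  K ⊆ ℰ.E ∧
  (∀ e ∈ K, ∀ e' ∈ K, e ≠ e' → ImmConflict ℰ e e') ∧
  (∀ e ∈ K, ∀ e' ∈ K, ∀ x, ℰ.bundle x e → ℰ.bundle x e')

/-- A cluster is a maximal partial cluster. -/
def Cluster (ℰ : BES Ev A) (K : Set Ev) : Prop :=
  PartialCluster ℰ K ∧ ∀ H, PartialCluster ℰ H → K ⊆ H → H = K

/-- `⟨e⟩`: the intersection of all clusters containing `e`. -/
def cell (ℰ : BES Ev A) (e : Ev) : Set Ev :=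
  ⋂₀ {K | Cluster ℰ K ∧ e ∈ K}

/-- `cfl x`: events in conflict with some event of `x`. -/
def cfl (ℰ : BES Ev A) (x : Set Ev) : Set Ev :=
  {e | e ∈ ℰ.E ∧ ∃ e' ∈ x, ℰ.conflict e e'}

/-- Confusion freeness. -/
def ConfusionFree (ℰ : BES Ev A) : Prop :=
  (∀ e e', ImmConflict ℰ e e' → e ∈ cell ℰ e') ∧
  (∀ x e, IsConfig ℰ x → cell ℰ e ∩ x = ∅ → IsConfig ℰ (x ∪ {e}) →
    ∀ e'' ∈ cell ℰ e, IsConfig ℰ (x ∪ {e''}))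

/-- Initial events: those pointed by no bundle. -/
def bInit (ℰ : BES Ev A) : Set Ev :=
  {e | e ∈ ℰ.E ∧ ∀ x, ¬ ℰ.bundle x e}

/-- Nondeterministic choice `ℰ + ℱ` (for disjoint BES). -/
def bchoice (ℰ ℱ : BES Ev A) : BES Ev A where
  E := ℰ.E ∪ ℱ.E
  conflict := fun e e' => ℰ.conflict e e' ∨ ℱ.conflict e e' ∨
    (e ∈ bInit ℰ ∧ e' ∈ bInit ℱ) ∨ (e ∈ bInit ℱ ∧ e' ∈ bInit ℰ) ∨
    (e ∈ ℰ.final ∧ e' ∈ ℱ.final) ∨ (e ∈ ℱ.final ∧ e' ∈ ℰ.final)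
  bundle := fun x e => ℰ.bundle x e ∨ ℱ.bundle x e
  lab := fun e => (ℰ.lab e).orElse (fun _ => ℱ.lab e)
  final := ℰ.final ∪ ℱ.final

/-- Sequential composition `ℰ · ℱ` (for disjoint BES). -/
def bseq (ℰ ℱ : BES Ev A) : BES Ev A where
  E := ℰ.E ∪ ℱ.E
  conflict := fun e e' => ℰ.conflict e e' ∨ ℱ.conflict e e'
  bundle := fun x e => ℰ.bundle x e ∨ ℱ.bundle x e ∨ (x = ℰ.final ∧ e ∈ bInit ℱ)
  lab := fun e => (ℰ.lab e).orElse (fun _ => ℱ.lab e)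
  final := ℱ.final

/-- Concurrent composition `ℰ ‖ ℱ` with fresh delimiter events `d₁, d₂`. -/
def bpar (ℰ ℱ : BES Ev A) (d₁ d₂ : Ev) : BES Ev A where
  E := ℰ.E ∪ ℱ.E ∪ {d₁, d₂}
  conflict := fun e e' => ℰ.conflict e e' ∨ ℱ.conflict e e'
  bundle := fun x e => ℰ.bundle x e ∨ ℱ.bundle x e ∨
    (x = {d₁} ∧ (e ∈ bInit ℰ ∨ e ∈ bInit ℱ)) ∨
    (x = ℰ.final ∧ e = d₂) ∨ (x = ℱ.final ∧ e = d₂)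
  lab := fun e => (ℰ.lab e).orElse (fun _ => ℱ.lab e)
  final := {d₂}

/-- Renaming of a BES along a map of events. -/
noncomputable def brename (g : Ev → Ev) (ℰ : BES Ev A) : BES Ev A where
  E := g '' ℰ.E
  conflict := fun e e' => ∃ a b, ℰ.conflict a b ∧ e = g a ∧ e' = g b
  bundle := fun x e => ∃ y a, ℰ.bundle y a ∧ x = g '' y ∧ e = g a
  lab := fun e => if h : ∃ a, a ∈ ℰ.E ∧ g a = e then ℰ.lab h.choose else none
  final := g '' ℰ.final

/-- `ℰ'` is a (fresh) copy of `ℰ`. -/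
def IsCopy (ℰ' ℰ : BES Ev A) : Prop :=
  ∃ g : Ev → Ev, Set.InjOn g ℰ.E ∧ ℰ' = brename g ℰ

/-- `𝒮` is the binary Kleene product `ℰ * ℱ`: the componentwise union of the
chain `ℱ ⊑ ℱ + ℰ·ℱ ⊑ ⋯` built with fresh disjoint copies at each stage. -/
def IsStarOf (ℰ ℱ 𝒮 : BES Ev A) : Prop :=
  ∃ c : ℕ → BES Ev A,
    IsCopy (c 0) ℱ ∧
    (∀ i, ∃ ℰ' ℱ' : BES Ev A, IsCopy ℰ' ℰ ∧ IsCopy ℱ' ℱ ∧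
      ℱ'.E ∩ (ℰ'.E ∪ (c i).E) = ∅ ∧ ℰ'.E ∩ (c i).E = ∅ ∧
      c (i + 1) = bchoice ℱ' (bseq ℰ' (c i)) ∧
      SubBES (c i) (c (i + 1))) ∧
    IsChainUnion c 𝒮

/-- The basic BES `0` (deadlock). -/
def besZero : BES Ev A :=
  ⟨∅, fun _ _ => False, fun _ _ => False, fun _ => none, ∅⟩

/-- The basic BES `1` (skip), with a single unlabelled final event. -/
def besOne (e : Ev) : BES Ev A :=
  ⟨{e}, fun _ _ => False, fun _ _ => False, fun _ => none, {e}⟩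

/-- The basic BES for a one-step action `a`. -/
noncomputable def besAct (e : Ev) (a : A) : BES Ev A :=
  ⟨{e}, fun _ _ => False, fun _ _ => False,
    fun e' => if e' = e then some a else none, {e}⟩

/-- Regular BES: built from the basic BES by `+`, `·`, `‖` and `*`. -/
inductive Regular : BES Ev A → Prop
  | zero : Regular besZero
  | one (e : Ev) : Regular (besOne e)
  | act (e : Ev) (a : A) : Regular (besAct e a)
  | choice {ℰ ℱ : BES Ev A} : Regular ℰ → Regular ℱ → ℰ.E ∩ ℱ.E = ∅ →
      Regular (bchoice ℰ ℱ)
  | seq {ℰ ℱ : BES Ev A} : Regular ℰ → Regular ℱ → ℰ.E ∩ ℱ.E = ∅ →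
      Regular (bseq ℰ ℱ)
  | par {ℰ ℱ : BES Ev A} (d₁ d₂ : Ev) : Regular ℰ → Regular ℱ →
      ℰ.E ∩ ℱ.E = ∅ → d₁ ≠ d₂ → d₁ ∉ ℰ.E ∪ ℱ.E → d₂ ∉ ℰ.E ∪ ℱ.E →
      Regular (bpar ℰ ℱ d₁ d₂)
  | star {ℰ ℱ 𝒮 : BES Ev A} : Regular ℰ → Regular ℱ → IsStarOf ℰ ℱ 𝒮 →
      Regular 𝒮

/-- A probability distribution on a BES: a discrete distribution on events
whose support is contained in a single cell `⟨e⟩`. -/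
def IsDistOn (ℰ : BES Ev A) (p : PMF Ev) : Prop :=
  ∃ e ∈ ℰ.E, p.support ⊆ cell ℰ e

/-- A probabilistic bundle event structure: a BES with a set of distributions. -/
structure PBES (Ev A : Type) where
  bes : BES Ev A
  dists : Set (PMF Ev)

/-- Well-formedness of a probabilistic BES. -/
def IsPBES (P : PBES Ev A) : Prop :=
  IsBES P.bes ∧ ConfusionFree P.bes ∧
  (∀ p ∈ P.dists, IsDistOn P.bes p) ∧
  (∀ e ∈ P.bes.E, ∃ p ∈ P.dists, e ∈ p.support)

/-- No bundle set contains a final event. -/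
def NoFinalBundle (ℰ : BES Ev A) : Prop :=
  ∀ x e, ℰ.bundle x e → x ∩ ℰ.final = ∅

/-- Probabilistic prefix: `x ⊑ Δ` iff `Δ = Σ_{e ∈ supp p} p e · δ_{x ∪ {e}}`
for some `p` in the distribution set, with `supp p` disjoint from `x` and all
extensions configurations. -/
def ProbPrefix (P : PBES Ev A) (x : Set Ev) (Δ : PMF (Set Ev)) : Prop :=
  IsConfig P.bes x ∧
  ∃ p ∈ P.dists, p.support ∩ x = ∅ ∧
    (∀ e ∈ p.support, IsConfig P.bes (x ∪ {e})) ∧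
    Δ = p.bind (fun e => PMF.pure (x ∪ {e}))

/-- Lifting of a relation `S ⊆ X × 𝒟(Y)` to `𝒟(X) × 𝒟(Y)`. -/
def Lift {X Y : Type} (S : X → PMF Y → Prop) (Δ : PMF X) (Θ : PMF Y) : Prop :=
  ∃ (ι : Type) (_ : Countable ι) (w : PMF ι) (xs : ι → X) (Θs : ι → PMF Y),
    Δ = w.bind (fun i => PMF.pure (xs i)) ∧
    (∀ i, w i ≠ 0 → S (xs i) (Θs i)) ∧
    Θ = w.bind Θs

/-- The labelled events of a configuration. -/
def hatSet (ℰ : BES Ev A) (x : Set Ev) : Set Ev :=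
  {e | e ∈ x ∧ ℰ.lab e ≠ none}

/-- Implementation (subsumption) `x ⊑_s y` between configurations: a
label-preserving monotonic bijection from the labelled events of `y` to those
of `x`. -/
def Subsum (ℰ : BES Ev A) (x : Set Ev) (ℱ : BES Ev A) (y : Set Ev) : Prop :=
  ∃ f : Ev → Ev, Set.BijOn f (hatSet ℱ y) (hatSet ℰ x) ∧
    (∀ e ∈ hatSet ℱ y, ℰ.lab (f e) = ℱ.lab e) ∧
    (∀ e e', e ∈ hatSet ℱ y → e' ∈ hatSet ℱ y →
      configOrder ℱ y e e' → configOrder ℰ x (f e) (f e'))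

/-- Probabilistic simulation from `P` to `Q`. -/
def IsSimulation (P Q : PBES Ev A) (S : Set Ev → PMF (Set Ev) → Prop) : Prop :=
  S ∅ (PMF.pure ∅) ∧
  (∀ x Θ, S x Θ → IsConfig P.bes x ∧
    ∀ y ∈ Θ.support, IsConfig Q.bes y ∧ Subsum P.bes x Q.bes y) ∧
  (∀ x Θ Δ', S x Θ → ProbPrefix P x Δ' →
    ∃ Θ', Relation.ReflTransGen (Lift (ProbPrefix Q)) Θ Θ' ∧ Lift S Δ' Θ') ∧
  (∀ x Θ, S x Θ → (x ∩ P.bes.final).Nonempty →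
    ∀ y ∈ Θ.support, (y ∩ Q.bes.final).Nonempty)

/-- `P ⊑ Q`: there exists a probabilistic simulation from `P` to `Q`. -/
def Sim (P Q : PBES Ev A) : Prop := ∃ S, IsSimulation P Q S

/-- Nondeterministic choice of pBES. -/
def pch (P Q : PBES Ev A) : PBES Ev A :=
  ⟨bchoice P.bes Q.bes, P.dists ∪ Q.dists⟩

/-- Sequential composition of pBES. -/
def pseq (P Q : PBES Ev A) : PBES Ev A :=
  ⟨bseq P.bes Q.bes, P.dists ∪ Q.dists⟩

/-- Concurrent composition of pBES with fresh delimiters `d₁, d₂`. -/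
noncomputable def ppar (P Q : PBES Ev A) (d₁ d₂ : Ev) : PBES Ev A :=
  ⟨bpar P.bes Q.bes d₁ d₂, P.dists ∪ Q.dists ∪ {PMF.pure d₁, PMF.pure d₂}⟩

/-- The sub-pBES order. -/
def SubPBES (P Q : PBES Ev A) : Prop :=
  SubBES P.bes Q.bes ∧ P.dists = {p | p ∈ Q.dists ∧ p.support ⊆ P.bes.E}

/-- Renaming of a pBES. -/
noncomputable def prename (g : Ev → Ev) (P : PBES Ev A) : PBES Ev A :=
  ⟨brename g P.bes, (fun p => p.map g) '' P.dists⟩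

/-- `P'` is a (fresh) copy of the pBES `P`. -/
def IsPCopy (P' P : PBES Ev A) : Prop :=
  ∃ g : Ev → Ev, Set.InjOn g P.bes.E ∧ P' = prename g P

/-- Componentwise union of a chain of pBES. -/
def IsPChainUnion (c : ℕ → PBES Ev A) (P : PBES Ev A) : Prop :=
  IsChainUnion (fun i => (c i).bes) P.bes ∧ P.dists = ⋃ i, (c i).dists

/-- `S` is the binary Kleene product `P * G` of pBES. -/
def IsPStarOf (P G S : PBES Ev A) : Prop :=
  ∃ c : ℕ → PBES Ev A,
    IsPCopy (c 0) G ∧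
    (∀ i, ∃ P' G' : PBES Ev A, IsPCopy P' P ∧ IsPCopy G' G ∧
      G'.bes.E ∩ (P'.bes.E ∪ (c i).bes.E) = ∅ ∧ P'.bes.E ∩ (c i).bes.E = ∅ ∧
      c (i + 1) = pch G' (pseq P' (c i)) ∧
      SubPBES (c i) (c (i + 1))) ∧
    IsPChainUnion c S

lemma mem_trace_E {ℰ : BES Ev A} {α : List Ev} (h : IsTrace ℰ α) {e : Ev} (he : e ∈ α) :
    e ∈ ℰ.E := by
  obtain ⟨l, r, rfl⟩ := List.append_of_mem he
  exact (h l e r rfl).1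

lemma config_subset_E {ℰ : BES Ev A} {x : Set Ev} (h : IsConfig ℰ x) : x ⊆ ℰ.E := by
  obtain ⟨α, hα, rfl⟩ := h
  exact fun e he => mem_trace_E hα he

lemma exists_first {S : Set Ev} :
    ∀ (α : List Ev), (∃ e ∈ α, e ∈ S) →
      ∃ l e r, α = l ++ e :: r ∧ e ∈ S ∧ ∀ e' ∈ l, e' ∉ S := by
  intro α
  induction α with
  | nil => rintro ⟨e, he, -⟩; simp at he
  | cons a α ih =>
    intro h
    by_cases ha : a ∈ S
    · exact ⟨[], a, α, rfl, ha, by simp⟩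
    · obtain ⟨e, he, heS⟩ := h
      rcases List.mem_cons.1 he with rfl | he
      · exact absurd heS ha
      · obtain ⟨l, e', r, rfl, h1, h2⟩ := ih ⟨e, he, heS⟩
        refine ⟨a :: l, e', r, rfl, h1, ?_⟩
        intro x hx
        rcases List.mem_cons.1 hx with rfl | hx
        · exact ha
        · exact h2 x hx

lemma pair_split {α : List Ev} {a b : Ev} (ha : a ∈ α) (hb : b ∈ α) (hne : a ≠ b) :
    (∃ l r, α = l ++ a :: r ∧ b ∈ l) ∨ (∃ l r, α = l ++ b :: r ∧ a ∈ l) := by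
  obtain ⟨l, r, rfl⟩ := List.append_of_mem ha
  rcases List.mem_append.1 hb with hb | hb
  · exact Or.inl ⟨l, r, rfl, hb⟩
  · rcases List.mem_cons.1 hb with rfl | hb
    · exact absurd rfl hne
    · obtain ⟨l₂, r₂, rfl⟩ := List.append_of_mem hb
      refine Or.inr ⟨l ++ a :: l₂, r₂, by simp, by simp⟩

lemma trace_transfer {ℰ 𝒢 : BES Ev A} {α : List Ev} (h : IsTrace ℰ α)
    (hE : ∀ e ∈ α, e ∈ 𝒢.E)
    (hb : ∀ e ∈ α, ∀ z, 𝒢.bundle z e → ℰ.bundle z e)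
    (hc : ∀ e e', e ∈ α → e' ∈ α → 𝒢.conflict e e' → ℰ.conflict e e') :
    IsTrace 𝒢 α := by
  intro l e r heq
  have hmem : e ∈ α := by rw [heq]; simp
  have H := h l e r heq
  refine ⟨hE e hmem, ?_, ?_⟩
  · intro z hz
    exact H.2.1 z (hb e hmem z hz)
  · intro e' he'
    have hl : e' ∈ α := by rw [heq]; exact List.mem_append.2 (Or.inl he')
    have := H.2.2 e' he'
    exact ⟨this.1, fun hcf => this.2 (hc e e' hmem hl hcf)⟩

lemma config_transfer {ℰ 𝒢 : BES Ev A} {x : Set Ev} (h : IsConfig ℰ x)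
    (hE : x ⊆ 𝒢.E)
    (hb : ∀ e ∈ x, ∀ z, 𝒢.bundle z e → ℰ.bundle z e)
    (hc : ∀ e e', e ∈ x → e' ∈ x → 𝒢.conflict e e' → ℰ.conflict e e') :
    IsConfig 𝒢 x := by
  obtain ⟨α, hα, hset⟩ := h
  refine ⟨α, trace_transfer hα ?_ ?_ ?_, hset⟩
  · intro e he; exact hE (hset ▸ he : e ∈ x)
  · intro e he; exact hb e (hset ▸ he)
  · intro e e' he he'; exact hc e e' (hset ▸ he) (hset ▸ he')

lemma filter_split {p : Ev → Bool} :
    ∀ {α : List Ev} {l' r' : List Ev} {e : Ev}, α.filter p = l' ++ e :: r' →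
      ∃ l r, α = l ++ e :: r ∧ l.filter p = l' ∧ p e = true := by
  intro α
  induction α with
  | nil => intro l' r' e h; simp at h
  | cons a α ih =>
    intro l' r' e h
    by_cases hp : p a
    · rw [List.filter_cons_of_pos hp] at h
      cases l' with
      | nil =>
        simp at h
        obtain ⟨rfl, -⟩ := h
        exact ⟨[], α, rfl, by simp, hp⟩
      | cons a' l₁ =>
        simp only [List.cons_append, List.cons.injEq] at h
        obtain ⟨rfl, h2⟩ := h
        obtain ⟨l, r, rfl, hf, hpe⟩ := ih h2
        exact ⟨a :: l, r, rfl, by rw [List.filter_cons_of_pos hp, hf], hpe⟩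
    · rw [List.filter_cons_of_neg hp] at h
      obtain ⟨l, r, rfl, hf, hpe⟩ := ih h
      exact ⟨a :: l, r, rfl, by rw [List.filter_cons_of_neg hp, hf], hpe⟩

lemma trace_filter {𝒢 ℰ : BES Ev A} {α : List Ev} (h : IsTrace 𝒢 α)
    (hb : ∀ e ∈ ℰ.E, ∀ z, ℰ.bundle z e → z ⊆ ℰ.E ∧ 𝒢.bundle z e)
    (hc : ∀ e e', ℰ.conflict e e' → 𝒢.conflict e e') :
    IsTrace ℰ (α.filter (fun e => decide (e ∈ ℰ.E))) := by
  intro l' e r' heq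
  obtain ⟨l, r, rfl, hf, hpe⟩ := filter_split heq
  have heE : e ∈ ℰ.E := by simpa using hpe
  have H := h l e r rfl
  refine ⟨heE, ?_, ?_⟩
  · intro z hz
    obtain ⟨hzE, hgz⟩ := hb e heE z hz
    obtain ⟨e', he'l, he'z⟩ := H.2.1 z hgz
    refine ⟨e', ?_, he'z⟩
    rw [← hf]
    exact List.mem_filter.2 ⟨he'l, by simpa using hzE he'z⟩
  · intro e' he'
    have he'l : e' ∈ l := by
      have := hf ▸ he'
      exact (List.mem_filter.1 this).1
    have := H.2.2 e' he'l
    exact ⟨this.1, fun hcf => this.2 (hc e e' hcf)⟩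

lemma config_restrict {𝒢 ℰ : BES Ev A} {x : Set Ev} (h : IsConfig 𝒢 x)
    (hb : ∀ e ∈ ℰ.E, ∀ z, ℰ.bundle z e → z ⊆ ℰ.E ∧ 𝒢.bundle z e)
    (hc : ∀ e e', ℰ.conflict e e' → 𝒢.conflict e e') :
    IsConfig ℰ (x ∩ ℰ.E) := by
  obtain ⟨α, hα, rfl⟩ := h
  refine ⟨α.filter (fun e => decide (e ∈ ℰ.E)), trace_filter hα hb hc, ?_⟩
  ext e
  simp [List.mem_filter, Set.mem_inter_iff]
/-- The induction invariant: well-formed and "well-terminating" (configurations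
containing a final event are maximal). -/
def Good (ℰ : BES Ev A) : Prop :=
  IsBES ℰ ∧ ∀ x y : Set Ev, IsConfig ℰ x → IsConfig ℰ y →
    (x ∩ ℰ.final).Nonempty → x ⊆ y → y = x

lemma disj_not_mem {S T : Set Ev} (hd : S ∩ T = ∅) {e : Ev} (he : e ∈ S) : e ∉ T := by
  intro h
  exact absurd (Set.mem_inter he h) (by rw [hd]; exact Set.notMem_empty e)

lemma good_zero : Good (besZero : BES Ev A) := by
  constructor
  · refine ⟨?_, ?_, ?_, ?_, ?_, ?_, ?_⟩ <;> simp [besZero]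
  · intro x y _ _ hne _
    rcases hne with ⟨e, -, he⟩
    exact absurd he (by simp [besZero])

lemma good_one (e : Ev) : Good (besOne e : BES Ev A) := by
  constructor
  · refine ⟨?_, ?_, ?_, ?_, ?_, ?_, ?_⟩ <;> simp [besOne]
  · intro x y hx hy hne hxy
    have hxE := config_subset_E hx
    have hyE := config_subset_E hy
    obtain ⟨f, hfx, hff⟩ := hne
    have hfe : f = e := hff
    subst hfe
    apply Set.Subset.antisymm
    · intro g hg
      have : g = f := hyE hg
      rw [this]; exact hfx
    · exact hxy

lemma good_act (e : Ev) (a : A) : Good (besAct e a : BES Ev A) := by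
  constructor
  · refine ⟨?_, ?_, ?_, ?_, ?_, ?_, ?_⟩ <;> simp [besAct]
  · intro x y hx hy hne hxy
    have hyE := config_subset_E hy
    obtain ⟨f, hfx, hff⟩ := hne
    have hfe : f = e := hff
    subst hfe
    apply Set.Subset.antisymm
    · intro g hg
      have : g = f := hyE hg
      rw [this]; exact hfx
    · exact hxy
lemma isBES_choice {ℰ ℱ : BES Ev A} (hE : IsBES ℰ) (hF : IsBES ℱ)
    (hd : ℰ.E ∩ ℱ.E = ∅) : IsBES (bchoice ℰ ℱ) := by
  obtain ⟨hiE, hsE, hdE, hbE, hlE, hfEE, hfCE⟩ := hE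
  obtain ⟨hiF, hsF, hdF, hbF, hlF, hfEF, hfCF⟩ := hF
  refine ⟨?_, ?_, ?_, ?_, ?_, ?_, ?_⟩
  · rintro e (h | h | ⟨h1, h2⟩ | ⟨h1, h2⟩ | ⟨h1, h2⟩ | ⟨h1, h2⟩)
    · exact hiE e h
    · exact hiF e h
    · exact disj_not_mem hd h1.1 h2.1
    · exact disj_not_mem hd h2.1 h1.1
    · exact disj_not_mem hd (hfEE h1) (hfEF h2)
    · exact disj_not_mem hd (hfEE h2) (hfEF h1)
  · rintro e e' (h | h | h | h | h | h)
    · exact Or.inl (hsE _ _ h)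
    · exact Or.inr (Or.inl (hsF _ _ h))
    · exact Or.inr (Or.inr (Or.inr (Or.inl ⟨h.2, h.1⟩)))
    · exact Or.inr (Or.inr (Or.inl ⟨h.2, h.1⟩))
    · exact Or.inr (Or.inr (Or.inr (Or.inr (Or.inr ⟨h.2, h.1⟩))))
    · exact Or.inr (Or.inr (Or.inr (Or.inr (Or.inl ⟨h.2, h.1⟩))))
  · rintro e e' (h | h | h | h | h | h)
    · exact ⟨Or.inl (hdE _ _ h).1, Or.inl (hdE _ _ h).2⟩
    · exact ⟨Or.inr (hdF _ _ h).1, Or.inr (hdF _ _ h).2⟩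
    · exact ⟨Or.inl h.1.1, Or.inr h.2.1⟩
    · exact ⟨Or.inr h.1.1, Or.inl h.2.1⟩
    · exact ⟨Or.inl (hfEE h.1), Or.inr (hfEF h.2)⟩
    · exact ⟨Or.inr (hfEF h.1), Or.inl (hfEE h.2)⟩
  · rintro z e (h | h)
    · obtain ⟨h1, h2, h3⟩ := hbE z e h
      exact ⟨Or.inl h1, fun a ha => Or.inl (h2 ha),
        fun a ha b hb hab => Or.inl (h3 a ha b hb hab)⟩
    · obtain ⟨h1, h2, h3⟩ := hbF z e h
      exact ⟨Or.inr h1, fun a ha => Or.inr (h2 ha),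
        fun a ha b hb hab => Or.inr (Or.inl (h3 a ha b hb hab))⟩
  · intro e h
    simp only [bchoice] at h ⊢
    cases hEe : ℰ.lab e with
    | some a => exact Or.inl (hlE e (by rw [hEe]; simp))
    | none =>
      rw [hEe] at h
      simp [Option.orElse] at h
      exact Or.inr (hlF e h)
  · rintro e (h | h)
    · exact Or.inl (hfEE h)
    · exact Or.inr (hfEF h)
  · rintro a (ha | ha) b (hb | hb) hab
    · exact Or.inl (hfCE a ha b hb hab)
    · exact Or.inr (Or.inr (Or.inr (Or.inr (Or.inl ⟨ha, hb⟩))))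
    · exact Or.inr (Or.inr (Or.inr (Or.inr (Or.inr ⟨ha, hb⟩))))
    · exact Or.inr (Or.inl (hfCF a ha b hb hab))

lemma choice_config_cases {ℰ ℱ : BES Ev A} (hE : IsBES ℰ) (hF : IsBES ℱ)
    (hd : ℰ.E ∩ ℱ.E = ∅) {x : Set Ev} (hx : IsConfig (bchoice ℰ ℱ) x) :
    x ⊆ ℰ.E ∨ x ⊆ ℱ.E := by
  by_contra hcon
  push_neg at hcon
  obtain ⟨h1, h2⟩ := hcon
  obtain ⟨b, hbx, hbF⟩ := Set.not_subset.1 h2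
  obtain ⟨a, hax, haE⟩ := Set.not_subset.1 h1
  have hxEF : x ⊆ ℰ.E ∪ ℱ.E := config_subset_E hx
  have haF : a ∈ ℱ.E := (hxEF hax).resolve_left haE
  have hbE : b ∈ ℰ.E := (hxEF hbx).resolve_right hbF
  obtain ⟨α, hα, hset⟩ := hx
  have hbα : b ∈ α := by rw [← hset] at hbx; exact hbx
  have haα : a ∈ α := by rw [← hset] at hax; exact hax
  obtain ⟨l, e₀, r, heq, he₀E, hlE⟩ := exists_first (S := ℰ.E) α ⟨b, hbα, hbE⟩
  obtain ⟨l₂, f₀, r₂, heq₂, hf₀F, hlF⟩ := exists_first (S := ℱ.E) α ⟨a, haα, haF⟩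
  have he₀init : e₀ ∈ bInit ℰ := by
    refine ⟨he₀E, fun z hz => ?_⟩
    obtain ⟨e', he'l, he'z⟩ := (hα l e₀ r heq).2.1 z (Or.inl hz)
    exact hlE e' he'l ((hE.2.2.2.1 z e₀ hz).2.1 he'z)
  have hf₀init : f₀ ∈ bInit ℱ := by
    refine ⟨hf₀F, fun z hz => ?_⟩
    obtain ⟨e', he'l, he'z⟩ := (hα l₂ f₀ r₂ heq₂).2.1 z (Or.inr hz)
    exact hlF e' he'l ((hF.2.2.2.1 z f₀ hz).2.1 he'z)
  have hne : e₀ ≠ f₀ := fun h => disj_not_mem hd he₀E (h ▸ hf₀F)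
  have he₀α : e₀ ∈ α := by rw [heq]; simp
  have hf₀α : f₀ ∈ α := by rw [heq₂]; simp
  rcases pair_split he₀α hf₀α hne with ⟨l', r', heq', hmem⟩ | ⟨l', r', heq', hmem⟩
  · exact ((hα l' e₀ r' heq').2.2 f₀ hmem).2
      (Or.inr (Or.inr (Or.inl ⟨he₀init, hf₀init⟩)))
  · exact ((hα l' f₀ r' heq').2.2 e₀ hmem).2
      (Or.inr (Or.inr (Or.inr (Or.inl ⟨hf₀init, he₀init⟩))))

lemma choice_config_left {ℰ ℱ : BES Ev A} (hF : IsBES ℱ) (hd : ℰ.E ∩ ℱ.E = ∅)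
    {x : Set Ev} (hx : IsConfig (bchoice ℰ ℱ) x) (hxE : x ⊆ ℰ.E) : IsConfig ℰ x := by
  refine config_transfer hx hxE ?_ ?_
  · intro e _ z hz; exact Or.inl hz
  · intro e e' _ _ h; exact Or.inl h

lemma choice_config_right {ℰ ℱ : BES Ev A} (hE : IsBES ℰ) (hd : ℰ.E ∩ ℱ.E = ∅)
    {x : Set Ev} (hx : IsConfig (bchoice ℰ ℱ) x) (hxF : x ⊆ ℱ.E) : IsConfig ℱ x := by
  refine config_transfer hx hxF ?_ ?_
  · intro e _ z hz; exact Or.inr hz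
  · intro e e' _ _ h; exact Or.inr (Or.inl h)

lemma good_choice {ℰ ℱ : BES Ev A} (hE : Good ℰ) (hF : Good ℱ)
    (hd : ℰ.E ∩ ℱ.E = ∅) : Good (bchoice ℰ ℱ) := by
  refine ⟨isBES_choice hE.1 hF.1 hd, ?_⟩
  intro x y hx hy hne hxy
  obtain ⟨f, hfx, hffin⟩ := hne
  rcases choice_config_cases hE.1 hF.1 hd hy with hyE | hyF
  · have hxE : x ⊆ ℰ.E := hxy.trans hyE
    have hffE : f ∈ ℰ.final := by
      rcases (hffin : f ∈ ℰ.final ∪ ℱ.final) with h | h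
      · exact h
      · exact absurd (hxE hfx) (fun hc => disj_not_mem hd hc (hF.1.2.2.2.2.2.1 h))
    exact hE.2 x y (choice_config_left hF.1 hd hx hxE)
      (choice_config_left hF.1 hd hy hyE) ⟨f, hfx, hffE⟩ hxy
  · have hxF : x ⊆ ℱ.E := hxy.trans hyF
    have hffF : f ∈ ℱ.final := by
      rcases (hffin : f ∈ ℰ.final ∪ ℱ.final) with h | h
      · exact absurd (hxF hfx) (fun hc => disj_not_mem hd (hE.1.2.2.2.2.2.1 h) hc)
      · exact h
    exact hF.2 x y (choice_config_right hE.1 hd hx hxF)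
      (choice_config_right hE.1 hd hy hyF) ⟨f, hfx, hffF⟩ hxy
lemma isBES_seq {ℰ ℱ : BES Ev A} (hE : IsBES ℰ) (hF : IsBES ℱ) :
    IsBES (bseq ℰ ℱ) := by
  obtain ⟨hiE, hsE, hdE, hbE, hlE, hfEE, hfCE⟩ := hE
  obtain ⟨hiF, hsF, hdF, hbF, hlF, hfEF, hfCF⟩ := hF
  refine ⟨?_, ?_, ?_, ?_, ?_, ?_, ?_⟩
  · rintro e (h | h)
    · exact hiE e h
    · exact hiF e h
  · rintro e e' (h | h)
    · exact Or.inl (hsE _ _ h)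
    · exact Or.inr (hsF _ _ h)
  · rintro e e' (h | h)
    · exact ⟨Or.inl (hdE _ _ h).1, Or.inl (hdE _ _ h).2⟩
    · exact ⟨Or.inr (hdF _ _ h).1, Or.inr (hdF _ _ h).2⟩
  · rintro z e (h | h | ⟨rfl, he⟩)
    · obtain ⟨h1, h2, h3⟩ := hbE z e h
      exact ⟨Or.inl h1, fun a ha => Or.inl (h2 ha),
        fun a ha b hb hab => Or.inl (h3 a ha b hb hab)⟩
    · obtain ⟨h1, h2, h3⟩ := hbF z e h
      exact ⟨Or.inr h1, fun a ha => Or.inr (h2 ha),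
        fun a ha b hb hab => Or.inr (h3 a ha b hb hab)⟩
    · exact ⟨Or.inr he.1, fun a ha => Or.inl (hfEE ha),
        fun a ha b hb hab => Or.inl (hfCE a ha b hb hab)⟩
  · intro e h
    simp only [bseq] at h ⊢
    cases hEe : ℰ.lab e with
    | some a => exact Or.inl (hlE e (by rw [hEe]; simp))
    | none =>
      rw [hEe] at h
      simp [Option.orElse] at h
      exact Or.inr (hlF e h)
  · intro e h
    exact Or.inr (hfEF h)
  · intro a ha b hb hab
    exact Or.inr (hfCF a ha b hb hab)

/-- In a trace of `ℰ·ℱ` containing an `ℱ`-event, some `ℰ`-final event occurs. -/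
lemma seq_trace_final {ℰ ℱ : BES Ev A} (hF : IsBES ℱ) {α : List Ev}
    (hα : IsTrace (bseq ℰ ℱ) α) {f : Ev} (hf : f ∈ α) (hfF : f ∈ ℱ.E) :
    ∃ e ∈ α, e ∈ ℰ.final := by
  obtain ⟨l, e₀, r, heq, he₀F, hlF⟩ := exists_first (S := ℱ.E) α ⟨f, hf, hfF⟩
  have he₀init : e₀ ∈ bInit ℱ := by
    refine ⟨he₀F, fun z hz => ?_⟩
    obtain ⟨e', he'l, he'z⟩ := (hα l e₀ r heq).2.1 z (Or.inr (Or.inl hz))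
    exact hlF e' he'l ((hF.2.2.2.1 z e₀ hz).2.1 he'z)
  obtain ⟨e', he'l, he'fin⟩ := (hα l e₀ r heq).2.1 ℰ.final
    (Or.inr (Or.inr ⟨rfl, he₀init⟩))
  exact ⟨e', by rw [heq]; exact List.mem_append.2 (Or.inl he'l), he'fin⟩

lemma seq_config_left {ℰ ℱ : BES Ev A} (hE : IsBES ℰ) {x : Set Ev}
    (hx : IsConfig (bseq ℰ ℱ) x) : IsConfig ℰ (x ∩ ℰ.E) := by
  refine config_restrict hx ?_ ?_
  · intro e _ z hz
    exact ⟨(hE.2.2.2.1 z e hz).2.1, Or.inl hz⟩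
  · intro e e' h; exact Or.inl h

lemma seq_config_right {ℰ ℱ : BES Ev A} (hF : IsBES ℱ) {x : Set Ev}
    (hx : IsConfig (bseq ℰ ℱ) x) : IsConfig ℱ (x ∩ ℱ.E) := by
  refine config_restrict hx ?_ ?_
  · intro e _ z hz
    exact ⟨(hF.2.2.2.1 z e hz).2.1, Or.inr (Or.inl hz)⟩
  · intro e e' h; exact Or.inr h

lemma good_seq {ℰ ℱ : BES Ev A} (hE : Good ℰ) (hF : Good ℱ) :
    Good (bseq ℰ ℱ) := by
  refine ⟨isBES_seq hE.1 hF.1, ?_⟩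
  intro x y hx hy hne hxy
  obtain ⟨f, hfx, hffin⟩ := hne
  have hfF : f ∈ ℱ.E := hF.1.2.2.2.2.2.1 hffin
  obtain ⟨α, hα, hset⟩ := hx
  obtain ⟨eE, heEx, heEfin⟩ := seq_trace_final hF.1 hα
    (by rw [← hset] at hfx; exact hfx) hfF
  have heEx' : eE ∈ x := hset ▸ heEx
  have heEE : eE ∈ ℰ.E := hE.1.2.2.2.2.2.1 heEfin
  have hxc : IsConfig (bseq ℰ ℱ) x := ⟨α, hα, hset⟩
  have h1 : y ∩ ℰ.E = x ∩ ℰ.E :=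
    hE.2 (x ∩ ℰ.E) (y ∩ ℰ.E) (seq_config_left hE.1 hxc) (seq_config_left hE.1 hy)
      ⟨eE, ⟨heEx', heEE⟩, heEfin⟩ (Set.inter_subset_inter_left _ hxy)
  have h2 : y ∩ ℱ.E = x ∩ ℱ.E :=
    hF.2 (x ∩ ℱ.E) (y ∩ ℱ.E) (seq_config_right hF.1 hxc) (seq_config_right hF.1 hy)
      ⟨f, ⟨hfx, hfF⟩, hffin⟩ (Set.inter_subset_inter_left _ hxy)
  have hyE : y ⊆ ℰ.E ∪ ℱ.E := config_subset_E hy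
  have hxE : x ⊆ ℰ.E ∪ ℱ.E := config_subset_E hxc
  apply Set.Subset.antisymm _ hxy
  intro g hg
  rcases hyE hg with h | h
  · exact (h1 ▸ Set.mem_inter hg h : g ∈ x ∩ ℰ.E).1
  · exact (h2 ▸ Set.mem_inter hg h : g ∈ x ∩ ℱ.E).1
lemma isBES_par {ℰ ℱ : BES Ev A} (d₁ d₂ : Ev) (hE : IsBES ℰ) (hF : IsBES ℱ) :
    IsBES (bpar ℰ ℱ d₁ d₂) := by
  obtain ⟨hiE, hsE, hdE, hbE, hlE, hfEE, hfCE⟩ := hE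
  obtain ⟨hiF, hsF, hdF, hbF, hlF, hfEF, hfCF⟩ := hF
  refine ⟨?_, ?_, ?_, ?_, ?_, ?_, ?_⟩
  · rintro e (h | h)
    · exact hiE e h
    · exact hiF e h
  · rintro e e' (h | h)
    · exact Or.inl (hsE _ _ h)
    · exact Or.inr (hsF _ _ h)
  · rintro e e' (h | h)
    · exact ⟨Or.inl (Or.inl (hdE _ _ h).1), Or.inl (Or.inl (hdE _ _ h).2)⟩
    · exact ⟨Or.inl (Or.inr (hdF _ _ h).1), Or.inl (Or.inr (hdF _ _ h).2)⟩
  · rintro z e (h | h | ⟨rfl, he⟩ | ⟨rfl, rfl⟩ | ⟨rfl, rfl⟩)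
    · obtain ⟨h1, h2, h3⟩ := hbE z e h
      exact ⟨Or.inl (Or.inl h1), fun a ha => Or.inl (Or.inl (h2 ha)),
        fun a ha b hb hab => Or.inl (h3 a ha b hb hab)⟩
    · obtain ⟨h1, h2, h3⟩ := hbF z e h
      exact ⟨Or.inl (Or.inr h1), fun a ha => Or.inl (Or.inr (h2 ha)),
        fun a ha b hb hab => Or.inr (h3 a ha b hb hab)⟩
    · refine ⟨?_, ?_, ?_⟩
      · rcases he with he | he
        · exact Or.inl (Or.inl he.1)
        · exact Or.inl (Or.inr he.1)
      · intro a ha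
        rw [Set.mem_singleton_iff.1 ha]
        exact Or.inr (Or.inl rfl)
      · intro a ha b hb hab
        rw [Set.mem_singleton_iff.1 ha, Set.mem_singleton_iff.1 hb] at hab
        exact absurd rfl hab
    · exact ⟨Or.inr (Or.inr rfl), fun a ha => Or.inl (Or.inl (hfEE ha)),
        fun a ha b hb hab => Or.inl (hfCE a ha b hb hab)⟩
    · exact ⟨Or.inr (Or.inr rfl), fun a ha => Or.inl (Or.inr (hfEF ha)),
        fun a ha b hb hab => Or.inr (hfCF a ha b hb hab)⟩
  · intro e h
    simp only [bpar] at h ⊢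
    cases hEe : ℰ.lab e with
    | some a => exact Or.inl (Or.inl (hlE e (by rw [hEe]; simp)))
    | none =>
      rw [hEe] at h
      simp [Option.orElse] at h
      exact Or.inl (Or.inr (hlF e h))
  · intro e h
    rw [Set.mem_singleton_iff.1 h]
    exact Or.inr (Or.inr rfl)
  · intro a ha b hb hab
    rw [Set.mem_singleton_iff.1 ha, Set.mem_singleton_iff.1 hb] at hab
    exact absurd rfl hab

lemma par_trace_d1 {ℰ ℱ : BES Ev A} {d₁ d₂ : Ev} (hE : IsBES ℰ) (hF : IsBES ℱ)
    {α : List Ev} (hα : IsTrace (bpar ℰ ℱ d₁ d₂) α) {e : Ev} (he : e ∈ α)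
    (heEF : e ∈ ℰ.E ∪ ℱ.E) : d₁ ∈ α := by
  obtain ⟨l, e₀, r, heq, he₀, hl⟩ :=
    exists_first (S := ℰ.E ∪ ℱ.E) α ⟨e, he, heEF⟩
  have he₀init : e₀ ∈ bInit ℰ ∨ e₀ ∈ bInit ℱ := by
    rcases he₀ with h | h
    · refine Or.inl ⟨h, fun z hz => ?_⟩
      obtain ⟨e', he'l, he'z⟩ := (hα l e₀ r heq).2.1 z (Or.inl hz)
      exact hl e' he'l (Or.inl ((hE.2.2.2.1 z e₀ hz).2.1 he'z))
    · refine Or.inr ⟨h, fun z hz => ?_⟩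
      obtain ⟨e', he'l, he'z⟩ := (hα l e₀ r heq).2.1 z (Or.inr (Or.inl hz))
      exact hl e' he'l (Or.inr ((hF.2.2.2.1 z e₀ hz).2.1 he'z))
  obtain ⟨e', he'l, he'd⟩ := (hα l e₀ r heq).2.1 {d₁}
    (Or.inr (Or.inr (Or.inl ⟨rfl, he₀init⟩)))
  rw [Set.mem_singleton_iff.1 he'd] at he'l
  rw [heq]
  exact List.mem_append.2 (Or.inl he'l)

lemma par_trace_finals {ℰ ℱ : BES Ev A} {d₁ d₂ : Ev} {α : List Ev}
    (hα : IsTrace (bpar ℰ ℱ d₁ d₂) α) (hd2 : d₂ ∈ α) :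
    (∃ e ∈ α, e ∈ ℰ.final) ∧ ∃ e ∈ α, e ∈ ℱ.final := by
  obtain ⟨l, r, heq⟩ := List.append_of_mem hd2
  have H := (hα l d₂ r heq).2.1
  obtain ⟨e1, he1l, he1⟩ := H ℰ.final (Or.inr (Or.inr (Or.inr (Or.inl ⟨rfl, rfl⟩))))
  obtain ⟨e2, he2l, he2⟩ := H ℱ.final (Or.inr (Or.inr (Or.inr (Or.inr ⟨rfl, rfl⟩))))
  exact ⟨⟨e1, by rw [heq]; exact List.mem_append.2 (Or.inl he1l), he1⟩,
    ⟨e2, by rw [heq]; exact List.mem_append.2 (Or.inl he2l), he2⟩⟩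

lemma par_config_left {ℰ ℱ : BES Ev A} {d₁ d₂ : Ev} (hE : IsBES ℰ) {x : Set Ev}
    (hx : IsConfig (bpar ℰ ℱ d₁ d₂) x) : IsConfig ℰ (x ∩ ℰ.E) := by
  refine config_restrict hx ?_ ?_
  · intro e _ z hz
    exact ⟨(hE.2.2.2.1 z e hz).2.1, Or.inl hz⟩
  · intro e e' h; exact Or.inl h

lemma par_config_right {ℰ ℱ : BES Ev A} {d₁ d₂ : Ev} (hF : IsBES ℱ) {x : Set Ev}
    (hx : IsConfig (bpar ℰ ℱ d₁ d₂) x) : IsConfig ℱ (x ∩ ℱ.E) := by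
  refine config_restrict hx ?_ ?_
  · intro e _ z hz
    exact ⟨(hF.2.2.2.1 z e hz).2.1, Or.inr (Or.inl hz)⟩
  · intro e e' h; exact Or.inr h

lemma good_par {ℰ ℱ : BES Ev A} (d₁ d₂ : Ev) (hE : Good ℰ) (hF : Good ℱ) :
    Good (bpar ℰ ℱ d₁ d₂) := by
  refine ⟨isBES_par d₁ d₂ hE.1 hF.1, ?_⟩
  intro x y hx hy hne hxy
  obtain ⟨f, hfx, hffin⟩ := hne
  have hfd2 : f = d₂ := Set.mem_singleton_iff.1 hffin
  rw [hfd2] at hfx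
  obtain ⟨α, hα, hset⟩ := hx
  have hd2α : d₂ ∈ α := by rw [← hset] at hfx; exact hfx
  obtain ⟨⟨eE, heEα, heEfin⟩, ⟨eF, heFα, heFfin⟩⟩ := par_trace_finals hα hd2α
  have heEE : eE ∈ ℰ.E := hE.1.2.2.2.2.2.1 heEfin
  have heFF : eF ∈ ℱ.E := hF.1.2.2.2.2.2.1 heFfin
  have hd1α : d₁ ∈ α := par_trace_d1 hE.1 hF.1 hα heEα (Or.inl heEE)
  have hd1x : d₁ ∈ x := hset ▸ hd1α
  have hd2x : d₂ ∈ x := hfx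
  have hxc : IsConfig (bpar ℰ ℱ d₁ d₂) x := ⟨α, hα, hset⟩
  have h1 : y ∩ ℰ.E = x ∩ ℰ.E :=
    hE.2 (x ∩ ℰ.E) (y ∩ ℰ.E) (par_config_left hE.1 hxc) (par_config_left hE.1 hy)
      ⟨eE, ⟨hset ▸ heEα, heEE⟩, heEfin⟩ (Set.inter_subset_inter_left _ hxy)
  have h2 : y ∩ ℱ.E = x ∩ ℱ.E :=
    hF.2 (x ∩ ℱ.E) (y ∩ ℱ.E) (par_config_right hF.1 hxc) (par_config_right hF.1 hy)
      ⟨eF, ⟨hset ▸ heFα, heFF⟩, heFfin⟩ (Set.inter_subset_inter_left _ hxy)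
  have hyE : y ⊆ ℰ.E ∪ ℱ.E ∪ {d₁, d₂} := config_subset_E hy
  apply Set.Subset.antisymm _ hxy
  intro g hg
  rcases hyE hg with (h | h) | h
  · exact (h1 ▸ Set.mem_inter hg h : g ∈ x ∩ ℰ.E).1
  · exact (h2 ▸ Set.mem_inter hg h : g ∈ x ∩ ℱ.E).1
  · rcases h with rfl | rfl
    · exact hd1x
    · exact hd2x
noncomputable def ginv (g : Ev → Ev) (S : Set Ev) : Ev → Ev :=
  fun e => if he : ∃ a, a ∈ S ∧ g a = e then he.choose else e

lemma ginv_spec {g : Ev → Ev} {S : Set Ev} {e : Ev} (he : e ∈ g '' S) :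
    ginv g S e ∈ S ∧ g (ginv g S e) = e := by
  obtain ⟨a, ha, rfl⟩ := he
  have hex : ∃ b, b ∈ S ∧ g b = g a := ⟨a, ha, rfl⟩
  simp only [ginv, dif_pos hex]
  exact ⟨hex.choose_spec.1, hex.choose_spec.2⟩

lemma map_split {h' : Ev → Ev} :
    ∀ {α l' r' : List Ev} {a : Ev}, α.map h' = l' ++ a :: r' →
      ∃ l e r, α = l ++ e :: r ∧ l.map h' = l' ∧ h' e = a := by
  intro α
  induction α with
  | nil => intro l' r' a h; simp at h
  | cons x α ih =>
    intro l' r' a h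
    cases l' with
    | nil =>
      simp only [List.map_cons, List.nil_append, List.cons.injEq] at h
      exact ⟨[], x, α, rfl, rfl, h.1⟩
    | cons a' l₁ =>
      simp only [List.map_cons, List.cons_append, List.cons.injEq] at h
      obtain ⟨rfl, h2⟩ := h
      obtain ⟨l, e, r, rfl, hmap, hh⟩ := ih h2
      exact ⟨x :: l, e, r, rfl, by rw [List.map_cons, hmap], hh⟩

lemma isBES_rename {ℰ : BES Ev A} {g : Ev → Ev} (hE : IsBES ℰ)
    (hg : Set.InjOn g ℰ.E) : IsBES (brename g ℰ) := by
  obtain ⟨hiE, hsE, hdE, hbE, hlE, hfEE, hfCE⟩ := hE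
  refine ⟨?_, ?_, ?_, ?_, ?_, ?_, ?_⟩
  · rintro e ⟨a, b, hab, rfl, hgb⟩
    have hdom := hdE _ _ hab
    have : a = b := hg hdom.1 hdom.2 hgb
    exact hiE a (this ▸ hab)
  · rintro e e' ⟨a, b, hab, rfl, rfl⟩
    exact ⟨b, a, hsE _ _ hab, rfl, rfl⟩
  · rintro e e' ⟨a, b, hab, rfl, rfl⟩
    exact ⟨⟨a, (hdE _ _ hab).1, rfl⟩, ⟨b, (hdE _ _ hab).2, rfl⟩⟩
  · rintro z e ⟨y, a, hy, rfl, rfl⟩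
    obtain ⟨h1, h2, h3⟩ := hbE y a hy
    refine ⟨⟨a, h1, rfl⟩, fun u hu => ?_, fun u hu v hv huv => ?_⟩
    · obtain ⟨b, hb, rfl⟩ := hu
      exact ⟨b, h2 hb, rfl⟩
    · obtain ⟨b, hb, rfl⟩ := hu
      obtain ⟨b', hb', rfl⟩ := hv
      have hbb : b ≠ b' := fun h => huv (by rw [h])
      exact ⟨b, b', h3 b hb b' hb' hbb, rfl, rfl⟩
  · intro e h
    simp only [brename] at h ⊢
    by_cases hex : ∃ a, a ∈ ℰ.E ∧ g a = e
    · exact ⟨hex.choose, hex.choose_spec.1, hex.choose_spec.2⟩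
    · rw [dif_neg hex] at h
      exact absurd rfl h
  · rintro e ⟨a, ha, rfl⟩
    exact ⟨a, hfEE ha, rfl⟩
  · rintro u ⟨a, ha, rfl⟩ v ⟨b, hb, rfl⟩ huv
    have hab : a ≠ b := fun h => huv (by rw [h])
    exact ⟨a, b, hfCE a ha b hb hab, rfl, rfl⟩

lemma rename_trace {ℰ : BES Ev A} {g : Ev → Ev} (hE : IsBES ℰ)
    (hg : Set.InjOn g ℰ.E) {α : List Ev} (hα : IsTrace (brename g ℰ) α) :
    IsTrace ℰ (α.map (ginv g ℰ.E)) := by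
  intro l' a r' heq
  obtain ⟨l, e, r, rfl, hmap, hh⟩ := map_split heq
  have H := hα l e r rfl
  have heE : e ∈ g '' ℰ.E := H.1
  obtain ⟨haE, hga⟩ := ginv_spec heE
  rw [hh] at haE hga
  refine ⟨haE, ?_, ?_⟩
  · intro z hz
    have hbr : (brename g ℰ).bundle (g '' z) e :=
      ⟨z, a, hz, rfl, by rw [← hga]⟩
    obtain ⟨e', he'l, he'z⟩ := H.2.1 (g '' z) hbr
    obtain ⟨b, hbz, rfl⟩ := he'z
    have he'α : g b ∈ l ++ e :: r := List.mem_append.2 (Or.inl he'l)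
    have he'E : g b ∈ g '' ℰ.E := mem_trace_E hα he'α
    obtain ⟨hinvE, hginv⟩ := ginv_spec he'E
    have hbE' : b ∈ ℰ.E := (hE.2.2.2.1 z a hz).2.1 hbz
    have hinv_eq : ginv g ℰ.E (g b) = b := hg hinvE hbE' hginv
    refine ⟨ginv g ℰ.E (g b), ?_, by rw [hinv_eq]; exact hbz⟩
    rw [← hmap]
    exact List.mem_map.2 ⟨g b, he'l, rfl⟩
  · intro e'' he''
    rw [← hmap] at he''
    obtain ⟨e₁, he₁l, rfl⟩ := List.mem_map.1 he''
    have he₁α : e₁ ∈ l ++ e :: r := List.mem_append.2 (Or.inl he₁l)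
    have he₁E : e₁ ∈ g '' ℰ.E := mem_trace_E hα he₁α
    obtain ⟨hinvE, hginv⟩ := ginv_spec he₁E
    have Hc := H.2.2 e₁ he₁l
    constructor
    · intro hcon
      apply Hc.1
      rw [← hga, ← hginv, hcon]
    · intro hcf
      exact Hc.2 ⟨a, ginv g ℰ.E e₁, hcf, hga.symm, hginv.symm⟩

lemma rename_config {ℰ : BES Ev A} {g : Ev → Ev} (hE : IsBES ℰ)
    (hg : Set.InjOn g ℰ.E) {x : Set Ev} (hx : IsConfig (brename g ℰ) x) :
    IsConfig ℰ (ginv g ℰ.E '' x) := by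
  obtain ⟨α, hα, hset⟩ := hx
  refine ⟨α.map (ginv g ℰ.E), rename_trace hE hg hα, ?_⟩
  ext e
  simp only [Set.mem_setOf_eq, List.mem_map, Set.mem_image]
  constructor
  · rintro ⟨e', he', rfl⟩
    exact ⟨e', hset ▸ he', rfl⟩
  · rintro ⟨e', he', rfl⟩
    exact ⟨e', by rw [← hset] at he'; exact he', rfl⟩

lemma good_copy {ℰ' ℰ : BES Ev A} (h : Good ℰ) (hc : IsCopy ℰ' ℰ) : Good ℰ' := by
  obtain ⟨g, hg, rfl⟩ := hc
  refine ⟨isBES_rename h.1 hg, ?_⟩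
  intro x y hx hy hne hxy
  have hx' := rename_config h.1 hg hx
  have hy' := rename_config h.1 hg hy
  have hxE : x ⊆ g '' ℰ.E := config_subset_E hx
  have hyE : y ⊆ g '' ℰ.E := config_subset_E hy
  obtain ⟨f, hfx, hffin⟩ := hne
  obtain ⟨a, hafin, rfl⟩ := (hffin : f ∈ g '' ℰ.final)
  have haE : a ∈ ℰ.E := h.1.2.2.2.2.2.1 hafin
  obtain ⟨hinvE, hginv⟩ := ginv_spec (hxE hfx)
  have hinva : ginv g ℰ.E (g a) = a := hg hinvE haE hginv
  have hne' : (ginv g ℰ.E '' x ∩ ℰ.final).Nonempty :=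
    ⟨a, ⟨⟨g a, hfx, hinva⟩, hafin⟩⟩
  have hsub : ginv g ℰ.E '' x ⊆ ginv g ℰ.E '' y := Set.image_mono hxy
  have heq := h.2 _ _ hx' hy' hne' hsub
  apply Set.Subset.antisymm _ hxy
  intro e he
  have heE := hyE he
  obtain ⟨hiE, hig⟩ := ginv_spec heE
  have : ginv g ℰ.E e ∈ ginv g ℰ.E '' x := heq ▸ Set.mem_image_of_mem _ he
  obtain ⟨e₂, he₂x, he₂⟩ := this
  have he₂E := hxE he₂x
  obtain ⟨hiE₂, hig₂⟩ := ginv_spec he₂E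
  have : e₂ = e := by rw [← hig₂, he₂, hig]
  exact this ▸ he₂x
lemma good_star {ℰ ℱ 𝒮 : BES Ev A} (hE : Good ℰ) (hF : Good ℱ)
    (hs : IsStarOf ℰ ℱ 𝒮) : Good 𝒮 := by
  obtain ⟨c, h0, hstep, hES, hcf, hbun, hlab1, hlab2, hfin⟩ := hs
  -- each element of the chain is Good
  have hgood : ∀ i, Good (c i) := by
    intro i
    induction i with
    | zero => exact good_copy hF h0
    | succ i ih =>
      obtain ⟨ℰ', ℱ', hcE, hcF, hd1, hd2, heq, -⟩ := hstep i
      rw [heq]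
      exact good_choice (good_copy hF hcF) (good_seq (good_copy hE hcE) ih) hd1
  -- monotonicity of events and finals along the chain
  have hEmono : ∀ i j, i ≤ j → (c i).E ⊆ (c j).E := by
    intro i j hij
    induction j, hij using Nat.le_induction with
    | base => exact subset_rfl
    | succ j' hj' ih =>
      obtain ⟨ℰ', ℱ', -, -, -, -, -, hsub⟩ := hstep j'
      exact ih.trans hsub.1
  have hfinmono : ∀ i j, i ≤ j → (c i).final ⊆ (c j).final := by
    intro i j hij
    induction j, hij using Nat.le_induction with
    | base => exact subset_rfl
    | succ j' hj' ih =>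
      obtain ⟨ℰ', ℱ', -, -, -, -, -, hsub⟩ := hstep j'
      intro e he
      exact ((hsub.2.2.2.2.2 e).1 (ih he)).1
  constructor
  · -- IsBES 𝒮
    refine ⟨?_, ?_, ?_, ?_, ?_, ?_, ?_⟩
    · intro e h
      obtain ⟨i, hi⟩ := (hcf e e).1 h
      exact (hgood i).1.1 e hi
    · intro e e' h
      obtain ⟨i, hi⟩ := (hcf e e').1 h
      exact (hcf e' e).2 ⟨i, (hgood i).1.2.1 _ _ hi⟩
    · intro e e' h
      obtain ⟨i, hi⟩ := (hcf e e').1 h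
      have := (hgood i).1.2.2.1 _ _ hi
      rw [hES]
      exact ⟨Set.mem_iUnion.2 ⟨i, this.1⟩, Set.mem_iUnion.2 ⟨i, this.2⟩⟩
    · intro z e h
      obtain ⟨i, hi⟩ := (hbun z e).1 h
      obtain ⟨h1, h2, h3⟩ := (hgood i).1.2.2.2.1 z e hi
      rw [hES]
      exact ⟨Set.mem_iUnion.2 ⟨i, h1⟩,
        fun a ha => Set.mem_iUnion.2 ⟨i, h2 ha⟩,
        fun a ha b hb hab => (hcf a b).2 ⟨i, h3 a ha b hb hab⟩⟩
    · intro e h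
      by_contra hc
      rw [hES] at hc
      exact h (hlab2 e hc)
    · intro e he
      rw [hfin] at he
      obtain ⟨i, hi⟩ := Set.mem_iUnion.1 he
      rw [hES]
      exact Set.mem_iUnion.2 ⟨i, (hgood i).1.2.2.2.2.2.1 hi⟩
    · intro a ha b hb hab
      rw [hfin] at ha hb
      obtain ⟨i, hi⟩ := Set.mem_iUnion.1 ha
      obtain ⟨j, hj⟩ := Set.mem_iUnion.1 hb
      have hai : a ∈ (c (max i j)).final := hfinmono i _ (le_max_left i j) hi
      have hbj : b ∈ (c (max i j)).final := hfinmono j _ (le_max_right i j) hj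
      exact (hcf a b).2 ⟨max i j, (hgood _).1.2.2.2.2.2.2 a hai b hbj hab⟩
  · -- maximality
    intro x y hx hy hne hxy
    -- find a level containing all events of y
    have hbound : ∀ (β : List Ev), (∀ e ∈ β, e ∈ 𝒮.E) → ∃ n, ∀ e ∈ β, e ∈ (c n).E := by
      intro β
      induction β with
      | nil => exact fun _ => ⟨0, by simp⟩
      | cons a β ih =>
        intro h
        obtain ⟨n, hn⟩ := ih (fun e he => h e (List.mem_cons_of_mem a he))
        have ha := h a List.mem_cons_self
        rw [hES] at ha
        obtain ⟨m, hm⟩ := Set.mem_iUnion.1 ha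
        refine ⟨max n m, ?_⟩
        intro e he
        rcases List.mem_cons.1 he with rfl | he
        · exact hEmono m _ (le_max_right n m) hm
        · exact hEmono n _ (le_max_left n m) (hn e he)
    obtain ⟨β, hβ, hsetβ⟩ := hy
    obtain ⟨n1, hn1⟩ := hbound β (fun e he => mem_trace_E hβ he)
    have hyc : IsConfig 𝒮 y := ⟨β, hβ, hsetβ⟩
    have hyn1 : y ⊆ (c n1).E := fun e he => hn1 e (by rw [← hsetβ] at he; exact he)
    obtain ⟨f, hfx, hffin⟩ := hne
    rw [hfin] at hffin
    obtain ⟨k, hk⟩ := Set.mem_iUnion.1 hffin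
    set n := max n1 k with hn
    have hyn : y ⊆ (c n).E := hyn1.trans (hEmono n1 n (le_max_left n1 k))
    have hxn : x ⊆ (c n).E := hxy.trans hyn
    have hfn : f ∈ (c n).final := hfinmono k n (le_max_right n1 k) hk
    have hxc : IsConfig (c n) x := by
      refine config_transfer hx hxn ?_ ?_
      · intro e _ z hz; exact (hbun z e).2 ⟨n, hz⟩
      · intro e e' _ _ h; exact (hcf e e').2 ⟨n, h⟩
    have hyc' : IsConfig (c n) y := by
      refine config_transfer hyc hyn ?_ ?_
      · intro e _ z hz; exact (hbun z e).2 ⟨n, hz⟩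
      · intro e e' _ _ h; exact (hcf e e').2 ⟨n, h⟩
    exact (hgood n).2 x y hxc hyc' ⟨f, hfx, hfn⟩ hxy

lemma regular_good {ℰ : BES Ev A} (h : Regular ℰ) : Good ℰ := by
  induction h with
  | zero => exact good_zero
  | one e => exact good_one e
  | act e a => exact good_act e a
  | choice hE hF hd ihE ihF => exact good_choice ihE ihF hd
  | seq hE hF hd ihE ihF => exact good_seq ihE ihF
  | par d₁ d₂ hE hF hd hdd h1 h2 ihE ihF => exact good_par d₁ d₂ ihE ihF
  | star hE hF hs ihE ihF => exact good_star ihE ihF hs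
/-- Corollary: for disjoint regular BES `ℰ`, `ℱ`, if a configuration `x` of
`ℰ·ℱ` meets `F`, then `x ∩ E` is a maximal configuration of `ℰ`. -/
theorem seq_config_maximal {Ev A : Type} (ℰ ℱ : BES Ev A)
    (hE : Regular ℰ) (hF : Regular ℱ) (hdisj : ℰ.E ∩ ℱ.E = ∅)
    (x : Set Ev) (hx : IsConfig (bseq ℰ ℱ) x) (hne : (x ∩ ℱ.E).Nonempty) :
    IsConfig ℰ (x ∩ ℰ.E) ∧
    ∀ y : Set Ev, IsConfig ℰ y → x ∩ ℰ.E ⊆ y → y = x ∩ ℰ.E := by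
  have hGE : Good ℰ := regular_good hE
  have hGF : Good ℱ := regular_good hF
  have hconf : IsConfig ℰ (x ∩ ℰ.E) := seq_config_left hGE.1 hx
  refine ⟨hconf, ?_⟩
  intro y hy hsub
  obtain ⟨f, hfx, hfF⟩ := hne
  obtain ⟨α, hα, hset⟩ := hx
  obtain ⟨eE, heEα, heEfin⟩ := seq_trace_final hGF.1 hα
    (by rw [← hset] at hfx; exact hfx) hfF
  have heEE : eE ∈ ℰ.E := hGE.1.2.2.2.2.2.1 heEfin
  exact hGE.2 (x ∩ ℰ.E) y hconf hy ⟨eE, ⟨⟨hset ▸ heEα, heEE⟩, heEfin⟩⟩ hsub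

end PCKA
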